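/- Let μ be a finite measure on a set P and r : P → U a measurable map into a separable Hilbert space with ∫ ‖r(p)‖² dμ(p) < ∞. Define R : U → L²(P, μ) by (R u)(p) = ⟨r(p), u⟩. Then R is bounded, and its correlation C = R* R satisfies ⟨C u, w⟩ = ∫ ⟨r(p), u⟩ ⟨r(p), w⟩ dμ(p) for all u, w ∈ U; moreover C is trace class with tr C = ∫ ‖r(p)‖² dμ(p). -/

import Mathlib

open RealInnerProductSpace MeasureTheory

lemma orthonormal_countable' {U : Type*} [NormedAddCommGroup U] [InnerProductSpace ℝ U]
    [TopologicalSpace.SeparableSpace U] {ι : Type*} {b : ι → U}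
    (hb : Orthonormal ℝ b) : Countable ι := by
  apply Pairwise.countable_of_isOpen_disjoint (s := fun i => Metric.ball (b i) (1/2))
  · intro i j hij
    rw [Function.onFun, Set.disjoint_left]
    intro x hxi hxj
    simp only [Metric.mem_ball] at hxi hxj
    have h1 : dist (b i) (b j) < 1 := by
      have := dist_triangle (b i) x (b j)
      rw [dist_comm (b i) x] at this
      linarith
    have h2 : ‖b i - b j‖ ^ 2 = 2 := by
      rw [norm_sub_sq_real, hb.2 hij]
      simp [hb.1]
      norm_num
    rw [dist_eq_norm] at h1
    nlinarith [norm_nonneg (b i - b j)]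
  · intro i; exact Metric.isOpen_ball
  · intro i; exact Metric.nonempty_ball.2 (by norm_num)

theorem correlation_of_parametric_map
    {P : Type*} [MeasurableSpace P] (μ : Measure P) [IsFiniteMeasure μ]
    {U : Type*} [NormedAddCommGroup U] [InnerProductSpace ℝ U] [CompleteSpace U]
    [TopologicalSpace.SeparableSpace U]
    (r : P → U) (hmeas : StronglyMeasurable r)
    (hL2 : Integrable (fun p => ‖r p‖ ^ 2) μ) :
    ∃ R : U →L[ℝ] Lp ℝ 2 μ,
      (∀ u : U, (R u : P → ℝ) =ᵐ[μ] fun p => ⟪r p, u⟫) ∧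
      (∀ u w : U, ⟪(R.adjoint ∘L R) u, w⟫ = ∫ p, ⟪r p, u⟫ * ⟪r p, w⟫ ∂μ) ∧
      ∀ (ι : Type) (b : HilbertBasis ι ℝ U),
        HasSum (fun i => ⟪(R.adjoint ∘L R) (b i), b i⟫) (∫ p, ‖r p‖ ^ 2 ∂μ) := by
  have hmemr : MemLp r 2 μ :=
    (memLp_two_iff_integrable_sq_norm hmeas.aestronglyMeasurable).2 hL2
  have hmem : ∀ u : U, MemLp (fun p => ⟪r p, u⟫) 2 μ := fun u => hmemr.inner_const u
  -- the linear map
  set K : ℝ := (eLpNorm r 2 μ).toReal with hK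
  set T : U →ₗ[ℝ] Lp ℝ 2 μ :=
    { toFun := fun u => (hmem u).toLp _
      map_add' := fun u v => by
        rw [← MemLp.toLp_add (hmem u) (hmem v)]
        apply MemLp.toLp_congr
        filter_upwards with p
        simp [inner_add_right]
      map_smul' := fun c u => by
        simp only [RingHom.id_apply]
        rw [← MemLp.toLp_const_smul c (hmem u)]
        apply MemLp.toLp_congr
        filter_upwards with p
        simp [inner_smul_right, smul_eq_mul] } with hT
  have hbound : ∀ u : U, ‖T u‖ ≤ K * ‖u‖ := by
    intro u
    have h1 : ‖T u‖ = (eLpNorm (fun p => ⟪r p, u⟫) 2 μ).toReal := Lp.norm_toLp _ (hmem u)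
    have h2 : eLpNorm (fun p => ⟪r p, u⟫) 2 μ ≤ eLpNorm (fun p => ‖u‖ • ‖r p‖) 2 μ := by
      apply eLpNorm_mono
      intro p
      rw [smul_eq_mul]
      calc ‖⟪r p, u⟫‖ ≤ ‖r p‖ * ‖u‖ := norm_inner_le_norm _ _
        _ ≤ ‖‖u‖ * ‖r p‖‖ := by rw [mul_comm]; exact le_abs_self _
    have h3 : eLpNorm (fun p => ‖u‖ • ‖r p‖) 2 μ = ‖u‖₊ * eLpNorm r 2 μ := by
      rw [show (fun p => ‖u‖ • ‖r p‖) = ‖u‖ • (fun p => ‖r p‖) from rfl,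
        eLpNorm_const_smul, eLpNorm_norm]
      simp
      rfl
    rw [h1]
    calc (eLpNorm (fun p => ⟪r p, u⟫) 2 μ).toReal
        ≤ ((‖u‖₊ : ENNReal) * eLpNorm r 2 μ).toReal := by
          apply ENNReal.toReal_mono
          · exact ENNReal.mul_ne_top (by simp) hmemr.2.ne
          · rw [← h3]; exact h2
      _ = K * ‖u‖ := by rw [ENNReal.toReal_mul]; simp [hK, mul_comm]
  set R : U →L[ℝ] Lp ℝ 2 μ := T.mkContinuous K hbound with hR
  have hcoe : ∀ u : U, (R u : P → ℝ) =ᵐ[μ] fun p => ⟪r p, u⟫ := fun u =>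
    MemLp.coeFn_toLp (hmem u)
  have hinner : ∀ u w : U, ⟪(R.adjoint ∘L R) u, w⟫ = ∫ p, ⟪r p, u⟫ * ⟪r p, w⟫ ∂μ := by
    intro u w
    have : ⟪(R.adjoint ∘L R) u, w⟫ = (⟪R u, R w⟫ : ℝ) := by
      rw [ContinuousLinearMap.comp_apply, ContinuousLinearMap.adjoint_inner_left]
    rw [this, L2.inner_def]
    apply integral_congr_ae
    filter_upwards [hcoe u, hcoe w] with p h1 h2
    rw [h1, h2]
    simp [RCLike.inner_apply, mul_comm]
  refine ⟨R, hcoe, hinner, ?_⟩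
  intro ι b
  haveI : Countable ι := orthonormal_countable' b.orthonormal
  set f : ι → P → ℝ := fun i p => ⟪r p, b i⟫ * ⟪r p, b i⟫ with hf
  have hfnn : ∀ i p, 0 ≤ f i p := fun i p => mul_self_nonneg _
  have hfi : ∀ i, Integrable (f i) μ := by
    intro i
    have := (memLp_two_iff_integrable_sq (hmem (b i)).1).1 (hmem (b i))
    simpa [hf, sq] using this
  have hbessel : ∀ (s : Finset ι) p, ∑ i ∈ s, f i p ≤ ‖r p‖ ^ 2 := by
    intro s p
    have := b.orthonormal.sum_inner_products_le (r p) (s := s)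
    calc ∑ i ∈ s, f i p = ∑ i ∈ s, ‖⟪b i, r p⟫‖ ^ 2 := by
          apply Finset.sum_congr rfl
          intro i _
          have hc : ⟪b i, r p⟫ = ⟪r p, b i⟫ := real_inner_comm _ _
          simp [hf, hc, Real.norm_eq_abs, sq_abs, sq]
      _ ≤ ‖r p‖ ^ 2 := this
  have hsum : Summable fun i => ∫ p, ‖f i p‖ ∂μ := by
    apply summable_of_sum_le (c := ∫ p, ‖r p‖ ^ 2 ∂μ)
    · intro i
      exact integral_nonneg fun p => norm_nonneg _
    · intro s
      have : ∑ i ∈ s, ∫ p, ‖f i p‖ ∂μ = ∫ p, ∑ i ∈ s, ‖f i p‖ ∂μ :=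
        (integral_finset_sum s fun i _ => (hfi i).norm).symm
      rw [this]
      apply integral_mono (integrable_finset_sum s fun i _ => (hfi i).norm) hL2
      intro p
      have : ∀ i, ‖f i p‖ = f i p := fun i => Real.norm_of_nonneg (hfnn i p)
      simp only [this]
      exact hbessel s p
  have key := hasSum_integral_of_summable_integral_norm hfi hsum
  have htsum : ∀ p, ∑' i, f i p = ‖r p‖ ^ 2 := by
    intro p
    have h := b.hasSum_inner_mul_inner (r p) (r p)
    have h' : HasSum (fun i => f i p) ⟪r p, r p⟫ := by
      have hfun : (fun i => f i p) = fun i => ⟪r p, b i⟫ * ⟪b i, r p⟫ := by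
        funext i
        rw [hf]
        simp only [real_inner_comm (b i) (r p)]
      rw [hfun]; exact h
    rw [h'.tsum_eq, real_inner_self_eq_norm_sq]
  have heq : (∫ p, ∑' i, f i p ∂μ) = ∫ p, ‖r p‖ ^ 2 ∂μ :=
    integral_congr_ae (Filter.Eventually.of_forall fun p => htsum p)
  rw [heq] at key
  have hfun : (fun i => ⟪(R.adjoint ∘L R) (b i), b i⟫) = fun i => ∫ p, f i p ∂μ :=
    funext fun i => hinner (b i) (b i)
  rw [hfun]; exact key
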